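/- Let q ≥ 1, p > 1, and let a_h > 0, b_h > 0 and d_{hk} = d_{kh} ≥ 0 (h ≠ k) be real numbers. Define J : (0,∞)^q → ℝ by J(s) = Σ_h a_h s_h² − Σ_h b_h s_h^{2p} + Σ_{h≠k} d_{hk} s_h^p s_k^p. If s* ∈ (0,∞)^q is a critical point of J, then s* is the unique critical point of J in (0,∞)^q and J(s*) = max_{s ∈ (0,∞)^q} J(s). -/

import Mathlib

open Finset


lemma tangent_lt {p : ℝ} (hp : 1 < p) {u u₀ : ℝ} (hu : 0 ≤ u) (hu₀ : 0 < u₀) (hne : u ≠ u₀) :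
    u₀ ^ p + p * u₀ ^ (p-1) * (u - u₀) < u ^ p := by
  have hz : -1 ≤ u / u₀ - 1 := by
    have : (0:ℝ) ≤ u / u₀ := div_nonneg hu hu₀.le
    linarith
  have hz' : u / u₀ - 1 ≠ 0 := by
    intro hc
    apply hne
    have : u / u₀ = 1 := by linarith
    field_simp at this
    linarith
  have hb := one_add_mul_self_lt_rpow_one_add hz hz' hp
  have h1 : (1 : ℝ) + (u / u₀ - 1) = u / u₀ := by ring
  rw [h1, Real.div_rpow hu hu₀.le] at hb
  have hup : (0:ℝ) < u₀ ^ p := Real.rpow_pos_of_pos hu₀ p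
  have hps : u₀ ^ (p-1) = u₀ ^ p / u₀ := by
    rw [Real.rpow_sub hu₀, Real.rpow_one]
  have hb2 := mul_lt_mul_of_pos_left hb hup
  rw [mul_div_cancel₀ _ (ne_of_gt hup)] at hb2
  rw [hps]
  have hu₀' : u₀ ≠ 0 := hu₀.ne'
  have e1 : u₀ ^ p * (1 + p * (u/u₀ - 1)) = u₀ ^ p + p * (u₀ ^ p / u₀) * (u - u₀) := by
    field_simp
  rw [← e1]
  exact hb2

lemma single_lt {p : ℝ} (hp : 1 < p) {A D t₀ : ℝ} (hA : 0 < A) (hD : 0 < D) (ht₀ : 0 < t₀)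
    (htan : A = p * D * t₀ ^ (2*p-2)) {t : ℝ} (ht : 0 < t) (hne : t ≠ t₀) :
    A * t ^ 2 - D * t ^ (2*p) < A * t₀ ^ 2 - D * t₀ ^ (2*p) := by
  have key : ∀ x : ℝ, 0 ≤ x → x ^ (2*p) = (x^2) ^ p := by
    intro x hx
    rw [← Real.rpow_natCast x 2, ← Real.rpow_mul hx]
    norm_num
  have key2 : t₀ ^ (2*p-2) = (t₀^2) ^ (p-1) := by
    rw [show (2:ℝ)*p - 2 = (2:ℕ) * (p-1) by push_cast; ring]
    rw [← Real.rpow_natCast t₀ 2, ← Real.rpow_mul ht₀.le]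
  have hune : t ^ 2 ≠ t₀ ^ 2 := by
    intro hc
    exact hne (by nlinarith)
  have htl := tangent_lt hp (by positivity : (0:ℝ) ≤ t^2) (by positivity : (0:ℝ) < t₀^2) hune
  rw [key t ht.le, key t₀ ht₀.le, htan, key2]
  nlinarith [mul_lt_mul_of_pos_left htl hD]


lemma upd_term {q : ℕ} (s : Fin q → ℝ) (h k : Fin q) (g : ℝ → ℝ) (g' : ℝ)
    (hg : HasDerivAt g g' (s h)) :
    HasDerivAt (fun t => g (Function.update s h t k)) (if k = h then g' else 0) (s h) := by
  by_cases hk : k = h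
  · subst hk
    simp only [Function.update_self, if_pos rfl]
    exact hg
  · simp only [if_neg hk]
    have : (fun t : ℝ => g (Function.update s h t k)) = fun _ => g (s k) := by
      funext t; rw [Function.update_of_ne hk]
    rw [this]
    exact hasDerivAt_const _ _

lemma aux_hasDerivAt {q : ℕ} (p : ℝ) (hp : 1 < p) (a b : Fin q → ℝ) (d : Fin q → Fin q → ℝ)
    (s : Fin q → ℝ) (hs : ∀ i, 0 < s i) (h : Fin q) :
    HasDerivAt (fun t => (∑ k, a k * Function.update s h t k ^ 2)
        - (∑ k, b k * Function.update s h t k ^ (2*p))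
        + ∑ i, ∑ k ∈ Finset.univ.erase i,
            d i k * Function.update s h t i ^ p * Function.update s h t k ^ p)
      (2 * a h * s h - 2 * p * b h * s h ^ (2*p-1)
        + (p * s h ^ (p-1)) * ((∑ k ∈ Finset.univ.erase h, d h k * s k ^ p)
            + ∑ i ∈ Finset.univ.erase h, d i h * s i ^ p)) (s h) := by
  have hsh := hs h
  have hA : HasDerivAt (fun t => ∑ k, a k * Function.update s h t k ^ 2)
      (2 * a h * s h) (s h) := by
    have := HasDerivAt.fun_sum (fun k (_ : k ∈ Finset.univ) =>
      ((upd_term s h k (fun x => x ^ 2) (2 * s h)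
        (by simpa using hasDerivAt_pow 2 (s h))).const_mul (a k)))
    simpa [Finset.sum_ite_eq', mul_comm, mul_assoc, mul_left_comm] using this
  have hB : HasDerivAt (fun t => ∑ k, b k * Function.update s h t k ^ (2*p))
      (2 * p * b h * s h ^ (2*p-1)) (s h) := by
    have := HasDerivAt.fun_sum (fun k (_ : k ∈ Finset.univ) =>
      ((upd_term s h k (fun x => x ^ (2*p)) (2*p * s h ^ (2*p-1))
        (Real.hasDerivAt_rpow_const (Or.inl hsh.ne'))).const_mul (b k)))
    simpa [Finset.sum_ite_eq', mul_comm, mul_assoc, mul_left_comm] using this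
  have hCone : ∀ i k : Fin q, HasDerivAt
      (fun t => d i k * Function.update s h t i ^ p * Function.update s h t k ^ p)
      ((d i k * (if i = h then p * s h ^ (p-1) else 0)) * s k ^ p
        + d i k * s i ^ p * (if k = h then p * s h ^ (p-1) else 0)) (s h) := by
    intro i k
    have h1 := (upd_term s h i (fun x => x ^ p) (p * s h ^ (p-1))
      (Real.hasDerivAt_rpow_const (Or.inl hsh.ne'))).const_mul (d i k)
    have h2 := upd_term s h k (fun x => x ^ p) (p * s h ^ (p-1))
      (Real.hasDerivAt_rpow_const (Or.inl hsh.ne'))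
    have := h1.fun_mul h2
    simpa [Function.update_eq_self, mul_ite, mul_zero] using this
  have hC : HasDerivAt (fun t => ∑ i, ∑ k ∈ Finset.univ.erase i,
        d i k * Function.update s h t i ^ p * Function.update s h t k ^ p)
      ((p * s h ^ (p-1)) * ((∑ k ∈ Finset.univ.erase h, d h k * s k ^ p)
            + ∑ i ∈ Finset.univ.erase h, d i h * s i ^ p)) (s h) := by
    have hsum := HasDerivAt.fun_sum (fun i (_ : i ∈ Finset.univ) =>
      HasDerivAt.fun_sum (fun k (_ : k ∈ Finset.univ.erase i) => hCone i k))
    refine hsum.congr_deriv ?_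
    have split : ∀ i : Fin q, ∑ k ∈ Finset.univ.erase i,
        ((d i k * (if i = h then p * s h ^ (p-1) else 0)) * s k ^ p
          + d i k * s i ^ p * (if k = h then p * s h ^ (p-1) else 0))
        = (if i = h then ∑ k ∈ Finset.univ.erase h, d h k * (p * s h ^ (p-1)) * s k ^ p else 0)
          + (if i = h then 0 else d i h * s i ^ p * (p * s h ^ (p-1))) := by
      intro i
      rw [Finset.sum_add_distrib]
      congr 1
      · by_cases hi : i = h
        · subst hi; simp [mul_comm, mul_assoc, mul_left_comm]
        · simp [hi]
      · by_cases hi : i = h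
        · subst hi
          simp [mul_ite, mul_zero]
        · simp only [mul_ite, mul_zero, if_neg hi]
          rw [Finset.sum_ite_eq' (Finset.univ.erase i) h]
          simp [Ne.symm hi]
    rw [Finset.sum_congr rfl (fun i _ => split i), Finset.sum_add_distrib]
    simp only [Finset.sum_ite_eq', Finset.mem_univ, if_pos]
    rw [Finset.sum_ite, Finset.sum_const_zero, zero_add]
    rw [Finset.filter_ne' Finset.univ h]
    rw [mul_add, Finset.mul_sum, Finset.mul_sum]
    congr 1
    · exact Finset.sum_congr rfl (fun k _ => by ring)
    · exact Finset.sum_congr rfl (fun i _ => by ring)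
  exact (hA.sub hB).add hC

lemma crit_eq {q : ℕ} (p : ℝ) (hp : 1 < p) (a b : Fin q → ℝ) (d : Fin q → Fin q → ℝ)
    (hdsym : ∀ h k, d h k = d k h)
    (J : (Fin q → ℝ) → ℝ)
    (hJ : ∀ s : Fin q → ℝ, J s =
      ∑ h, a h * s h ^ 2 - ∑ h, b h * s h ^ (2*p)
        + ∑ h, ∑ k ∈ Finset.univ.erase h, d h k * s h ^ p * s k ^ p)
    (s : Fin q → ℝ) (hs : ∀ i, 0 < s i) (h : Fin q)
    (hcr : deriv (fun t => J (Function.update s h t)) (s h) = 0) :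
    a h * s h ^ 2 = p * (b h * (s h ^ p)^2)
      - p * (s h ^ p * ∑ k ∈ Finset.univ.erase h, d h k * s k ^ p) := by
  have hsh := hs h
  have hF : (fun t => J (Function.update s h t)) = (fun t =>
      (∑ k, a k * Function.update s h t k ^ 2)
        - (∑ k, b k * Function.update s h t k ^ (2*p))
        + ∑ i, ∑ k ∈ Finset.univ.erase i,
            d i k * Function.update s h t i ^ p * Function.update s h t k ^ p) :=
    funext fun t => hJ _
  rw [hF] at hcr
  have hd := aux_hasDerivAt p hp a b d s hs h
  have h0 : 2 * a h * s h - 2 * p * b h * s h ^ (2*p-1)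
        + (p * s h ^ (p-1)) * ((∑ k ∈ Finset.univ.erase h, d h k * s k ^ p)
            + ∑ i ∈ Finset.univ.erase h, d i h * s i ^ p) = 0 := by
    rw [← hd.deriv]; exact hcr
  have hsym : ∑ i ∈ Finset.univ.erase h, d i h * s i ^ p
      = ∑ k ∈ Finset.univ.erase h, d h k * s k ^ p :=
    Finset.sum_congr rfl (fun i _ => by rw [hdsym i h])
  rw [hsym] at h0
  set E := ∑ k ∈ Finset.univ.erase h, d h k * s k ^ p with hE
  set X := s h ^ p with hX
  have e1 : s h ^ (2*p-1) = X^2 / s h := by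
    rw [Real.rpow_sub hsh, Real.rpow_one]
    congr 1
    rw [sq, ← Real.rpow_add hsh]
    congr 1
    ring
  have e2 : s h ^ (p-1) = X / s h := by rw [Real.rpow_sub hsh, Real.rpow_one]
  rw [e1, e2] at h0
  have hsne : s h ≠ 0 := hsh.ne'
  field_simp at h0
  nlinarith [h0, sq_nonneg (s h)]

lemma amgm_w {u v w₁ w₂ : ℝ} (hw₁ : 0 < w₁) (hw₂ : 0 < w₂) :
    u * v ≤ (u^2 * (w₂/w₁) + v^2 * (w₁/w₂))/2 := by
  rw [le_div_iff₀ (by norm_num : (0:ℝ) < 2)]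
  have h1 : u^2*(w₂/w₁) + v^2*(w₁/w₂) = (u^2*w₂^2 + v^2*w₁^2)/(w₁*w₂) := by
    field_simp
  rw [h1, le_div_iff₀ (by positivity)]
  nlinarith [sq_nonneg (u*w₂ - v*w₁)]

lemma sum_swap_erase {q : ℕ} (F : Fin q → Fin q → ℝ) :
    ∑ h, ∑ k ∈ Finset.univ.erase h, F h k = ∑ h, ∑ k ∈ Finset.univ.erase h, F k h := by
  rw [Finset.sum_comm' (t' := Finset.univ) (s' := fun k => Finset.univ.erase k)
    (by intro x y; simp only [Finset.mem_univ, Finset.mem_erase, true_and, and_true]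
        exact ne_comm)]

lemma chain {q : ℕ} (p : ℝ) (hp : 1 < p) (a b : Fin q → ℝ) (d : Fin q → Fin q → ℝ)
    (ha : ∀ h, 0 < a h) (hb : ∀ h, 0 < b h)
    (hdsym : ∀ h k, d h k = d k h) (hd0 : ∀ h k, h ≠ k → 0 ≤ d h k)
    (J : (Fin q → ℝ) → ℝ)
    (hJ : ∀ s : Fin q → ℝ, J s =
      ∑ h, a h * s h ^ 2 - ∑ h, b h * s h ^ (2*p)
        + ∑ h, ∑ k ∈ Finset.univ.erase h, d h k * s h ^ p * s k ^ p)
    (s₀ : Fin q → ℝ) (hs₀ : ∀ h, 0 < s₀ h)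
    (hEQ : ∀ h, a h * s₀ h ^ 2 = p * (b h * (s₀ h ^ p)^2)
      - p * (s₀ h ^ p * ∑ k ∈ Finset.univ.erase h, d h k * s₀ k ^ p))
    (s : Fin q → ℝ) (hs : ∀ h, 0 < s h) :
    J s ≤ J s₀ ∧ (s ≠ s₀ → J s < J s₀) := by
  have hp0 : (0:ℝ) < p := lt_trans one_pos hp
  set X₀ : Fin q → ℝ := fun h => s₀ h ^ p with hX₀def
  set X : Fin q → ℝ := fun h => s h ^ p with hXdef
  have hX₀pos : ∀ h, 0 < X₀ h := fun h => Real.rpow_pos_of_pos (hs₀ h) p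
  have hXpos : ∀ h, 0 < X h := fun h => Real.rpow_pos_of_pos (hs h) p
  set E₀ : Fin q → ℝ := fun h => ∑ k ∈ Finset.univ.erase h, d h k * X₀ k with hE₀def
  set c : Fin q → ℝ := fun h => b h * X₀ h - E₀ h with hcdef
  have hEQ' : ∀ h, a h * s₀ h ^ 2 = p * X₀ h * c h := by
    intro h
    rw [hcdef]
    have := hEQ h
    simp only [hX₀def, hE₀def]
    rw [this]
    ring
  have hcpos : ∀ h, 0 < c h := by
    intro h
    have h1 : 0 < a h * s₀ h ^ 2 := mul_pos (ha h) (pow_pos (hs₀ h) 2)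
    rw [hEQ' h] at h1
    by_contra hcon
    push_neg at hcon
    have h2 : p * X₀ h * c h ≤ 0 :=
      mul_nonpos_of_nonneg_of_nonpos (mul_pos hp0 (hX₀pos h)).le hcon
    linarith
  set f : Fin q → ℝ → ℝ := fun h t => a h * t^2 - (c h / X₀ h) * t ^ (2*p) with hfdef
  have h2p : ∀ x : ℝ, 0 ≤ x → x ^ (2*p) = (x^p)^2 := by
    intro x hx
    rw [show (2:ℝ)*p = p * (2:ℕ) by push_cast; ring, Real.rpow_mul hx, Real.rpow_natCast]
  -- Step 1: J s ≤ ∑ f h (s h)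
  have key1 : J s ≤ ∑ h, f h (s h) := by
    rw [hJ s]
    have hS : ∑ h, ∑ k ∈ Finset.univ.erase h, d h k * s h ^ p * s k ^ p
        ≤ ∑ h, (X h^2 / X₀ h) * E₀ h := by
      have step1 : ∑ h, ∑ k ∈ Finset.univ.erase h, d h k * s h ^ p * s k ^ p
          ≤ ∑ h, ∑ k ∈ Finset.univ.erase h,
            (d h k * (X h^2 * (X₀ k / X₀ h))/2 + d h k * (X k^2 * (X₀ h / X₀ k))/2) := by
        apply Finset.sum_le_sum
        intro h _
        apply Finset.sum_le_sum
        intro k hk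
        have hkh : h ≠ k := (Finset.ne_of_mem_erase hk).symm
        have hdk := hd0 h k hkh
        have ham := amgm_w (u := X h) (v := X k) (hX₀pos h) (hX₀pos k)
        calc d h k * s h ^ p * s k ^ p = d h k * (X h * X k) := by
              simp only [hXdef]; ring
          _ ≤ d h k * ((X h^2 * (X₀ k/X₀ h) + X k^2 * (X₀ h/X₀ k))/2) :=
              mul_le_mul_of_nonneg_left ham hdk
          _ = d h k * (X h^2 * (X₀ k / X₀ h))/2 + d h k * (X k^2 * (X₀ h / X₀ k))/2 := by
              ring
      have step2 : ∑ h, ∑ k ∈ Finset.univ.erase h,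
            (d h k * (X h^2 * (X₀ k / X₀ h))/2 + d h k * (X k^2 * (X₀ h / X₀ k))/2)
          = ∑ h, (X h^2 / X₀ h) * E₀ h := by
        rw [show (∑ h, ∑ k ∈ Finset.univ.erase h,
            (d h k * (X h^2 * (X₀ k / X₀ h))/2 + d h k * (X k^2 * (X₀ h / X₀ k))/2))
          = (∑ h, ∑ k ∈ Finset.univ.erase h, d h k * (X h^2 * (X₀ k / X₀ h))/2)
            + ∑ h, ∑ k ∈ Finset.univ.erase h, d h k * (X k^2 * (X₀ h / X₀ k))/2 by
            rw [← Finset.sum_add_distrib]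
            exact Finset.sum_congr rfl (fun h _ => by rw [← Finset.sum_add_distrib])]
        have hswap : ∑ h, ∑ k ∈ Finset.univ.erase h, d h k * (X k^2 * (X₀ h / X₀ k))/2
            = ∑ h, ∑ k ∈ Finset.univ.erase h, d h k * (X h^2 * (X₀ k / X₀ h))/2 := by
          rw [sum_swap_erase (fun h k => d h k * (X k^2 * (X₀ h / X₀ k))/2)]
          exact Finset.sum_congr rfl (fun h _ => Finset.sum_congr rfl
            (fun k _ => by rw [hdsym k h]))
        rw [hswap, ← Finset.sum_add_distrib]
        apply Finset.sum_congr rfl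
        intro h _
        rw [hE₀def, Finset.mul_sum]
        rw [← Finset.sum_add_distrib]
        apply Finset.sum_congr rfl
        intro k _
        have := (hX₀pos h).ne'
        field_simp
        ring
      calc _ ≤ _ := step1
        _ = _ := step2
    have hrw : ∑ h, b h * s h ^ (2*p) = ∑ h, b h * (X h)^2 :=
      Finset.sum_congr rfl (fun h _ => by rw [h2p (s h) (hs h).le])
    rw [hrw]
    have : ∀ h, f h (s h) = a h * s h ^ 2 - b h * (X h)^2 + (X h^2 / X₀ h) * E₀ h := by
      intro h
      simp only [hfdef]
      rw [h2p (s h) (hs h).le, hcdef]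
      have := (hX₀pos h).ne'
      field_simp
      ring
    rw [Finset.sum_congr rfl (fun h _ => this h), Finset.sum_add_distrib,
      ← Finset.sum_sub_distrib]
    linarith [hS]
  -- Step 2: pointwise max
  have key2 : ∀ h, (f h (s h) ≤ f h (s₀ h)) ∧ (s h ≠ s₀ h → f h (s h) < f h (s₀ h)) := by
    intro h
    have hD : 0 < c h / X₀ h := div_pos (hcpos h) (hX₀pos h)
    have htan : a h = p * (c h / X₀ h) * s₀ h ^ (2*p-2) := by
      have e3 : s₀ h ^ (2*p-2) = (X₀ h)^2 / s₀ h ^ 2 := by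
        rw [show (2:ℝ)*p-2 = 2*p - (2:ℕ) by push_cast; ring]
        rw [Real.rpow_sub (hs₀ h), Real.rpow_natCast]
        congr 1
        rw [← h2p (s₀ h) (hs₀ h).le]
      rw [e3]
      have h1 := hEQ' h
      have h2 := (hX₀pos h).ne'
      have h3 := (hs₀ h).ne'
      field_simp
      simp only [hcdef] at h1
      linear_combination h1
    constructor
    · rcases eq_or_ne (s h) (s₀ h) with he | hne
      · rw [he]
      · exact (single_lt hp (ha h) hD (hs₀ h) htan (hs h) hne).le
    · intro hne
      exact single_lt hp (ha h) hD (hs₀ h) htan (hs h) hne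
  -- Step 3: ∑ f h (s₀ h) = J s₀
  have key3 : ∑ h, f h (s₀ h) = J s₀ := by
    rw [hJ s₀]
    have hrw : ∑ h, b h * s₀ h ^ (2*p) = ∑ h, b h * (X₀ h)^2 :=
      Finset.sum_congr rfl (fun h _ => by rw [h2p (s₀ h) (hs₀ h).le])
    rw [hrw]
    have hdd : ∑ h, ∑ k ∈ Finset.univ.erase h, d h k * s₀ h ^ p * s₀ k ^ p
        = ∑ h, X₀ h * E₀ h := by
      apply Finset.sum_congr rfl
      intro h _
      rw [hE₀def, Finset.mul_sum]
      exact Finset.sum_congr rfl (fun k _ => by simp only [hX₀def]; ring)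
    rw [hdd]
    have : ∀ h, f h (s₀ h) = a h * s₀ h ^ 2 - b h * (X₀ h)^2 + X₀ h * E₀ h := by
      intro h
      simp only [hfdef]
      rw [h2p (s₀ h) (hs₀ h).le, hcdef]
      have := (hX₀pos h).ne'
      field_simp
      ring
    rw [Finset.sum_congr rfl (fun h _ => this h), Finset.sum_add_distrib,
      ← Finset.sum_sub_distrib]
  constructor
  · calc J s ≤ ∑ h, f h (s h) := key1
      _ ≤ ∑ h, f h (s₀ h) := Finset.sum_le_sum (fun h _ => (key2 h).1)
      _ = J s₀ := key3
  · intro hne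
    obtain ⟨h0, hh0⟩ : ∃ h0, s h0 ≠ s₀ h0 := by
      by_contra hc
      push_neg at hc
      exact hne (funext hc)
    calc J s ≤ ∑ h, f h (s h) := key1
      _ < ∑ h, f h (s₀ h) :=
        Finset.sum_lt_sum (fun h _ => (key2 h).1) ⟨h0, Finset.mem_univ h0, (key2 h0).2 hh0⟩
      _ = J s₀ := key3

/-- Fibering-map lemma: for `J(s) = Σ a_h s_h² − Σ b_h s_h^{2p} + Σ_{h≠k} d_{hk} s_h^p s_k^p`
with `a_h, b_h > 0` and `d_{hk} = d_{kh} ≥ 0`, an interior critical point `s*` in `(0,∞)^q`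
is the unique critical point there and is a global maximum of `J` on `(0,∞)^q`. -/
theorem stmt6 (q : ℕ) (hq : 1 ≤ q) (p : ℝ) (hp : 1 < p)
    (a b : Fin q → ℝ) (d : Fin q → Fin q → ℝ)
    (ha : ∀ h, 0 < a h) (hb : ∀ h, 0 < b h)
    (hdsym : ∀ h k, d h k = d k h) (hd0 : ∀ h k, h ≠ k → 0 ≤ d h k)
    (J : (Fin q → ℝ) → ℝ)
    (hJ : ∀ s : Fin q → ℝ, J s =
      ∑ h, a h * s h ^ 2 - ∑ h, b h * s h ^ (2*p)
        + ∑ h, ∑ k ∈ Finset.univ.erase h, d h k * s h ^ p * s k ^ p)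
    (s₀ : Fin q → ℝ) (hs₀ : ∀ h, 0 < s₀ h)
    (hcrit : ∀ h, deriv (fun t => J (Function.update s₀ h t)) (s₀ h) = 0) :
    (∀ s : Fin q → ℝ, (∀ h, 0 < s h) →
      (∀ h, deriv (fun t => J (Function.update s h t)) (s h) = 0) → s = s₀) ∧
    (∀ s : Fin q → ℝ, (∀ h, 0 < s h) → J s ≤ J s₀) := by
  have hEQ₀ : ∀ h, a h * s₀ h ^ 2 = p * (b h * (s₀ h ^ p)^2)
      - p * (s₀ h ^ p * ∑ k ∈ Finset.univ.erase h, d h k * s₀ k ^ p) :=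
    fun h => crit_eq p hp a b d hdsym J hJ s₀ hs₀ h (hcrit h)
  constructor
  · intro s hspos hscrit
    by_contra hne
    have hEQs : ∀ h, a h * s h ^ 2 = p * (b h * (s h ^ p)^2)
        - p * (s h ^ p * ∑ k ∈ Finset.univ.erase h, d h k * s k ^ p) :=
      fun h => crit_eq p hp a b d hdsym J hJ s hspos h (hscrit h)
    have h1 := (chain p hp a b d ha hb hdsym hd0 J hJ s₀ hs₀ hEQ₀ s hspos).2 hne
    have h2 := (chain p hp a b d ha hb hdsym hd0 J hJ s hspos hEQs s₀ hs₀).1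
    linarith
  · intro s hspos
    exact (chain p hp a b d ha hb hdsym hd0 J hJ s₀ hs₀ hEQ₀ s hspos).1
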